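/- For every finite coloring of ℕ there exists a strictly increasing infinite sequence (x_n) such that the set FS(x_n) = { ∑_{i∈F} x_i : F a nonempty finite subset of ℕ } is monochromatic. -/

import Mathlib

/-- Block data: `blk b n = (start, length)` of the `n`-th block. -/
noncomputable def hindmanBlk (b : Stream' ℕ) : ℕ → ℕ × ℕ
  | 0 => (0, 1)
  | n + 1 =>
    let p := hindmanBlk b n
    (p.1 + p.2, (∑ i ∈ Finset.Ico p.1 (p.1 + p.2), b.get i) + 1)

/-- Hindman's Theorem: for every finite coloring of ℕ there is a strictly
increasing infinite sequence all of whose finite sums of distinct terms are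
monochromatic. -/
theorem hindman (r : ℕ) (c : ℕ → Fin r) :
    ∃ x : ℕ → ℕ, StrictMono x ∧ (∀ n, 0 < x n) ∧
      ∃ j : Fin r, ∀ F : Finset ℕ, F.Nonempty → c (∑ i ∈ F, x i) = j := by
  -- the seed stream of positive naturals
  set a : Stream' ℕ := fun n => n + 1 with ha
  have key : ∀ (s : Stream' ℕ) m, m ∈ Hindman.FS s → (∀ i, 0 < s.get i) → 0 < m := by
    intro s m hm
    induction hm with
    | head' t => exact fun ht => ht 0
    | tail' t m h ih => exact fun ht => ih fun i => ht (i + 1)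
    | cons' t m h ih =>
      intro ht
      have := ih fun i => ht (i + 1)
      have h0 := ht 0
      exact Nat.lt_of_lt_of_le this (Nat.le_add_left _ _)
  have hapos : ∀ m ∈ Hindman.FS a, 0 < m := fun m hm => key a m hm fun i => Nat.succ_pos i
  -- the cover by color classes
  set S : Set (Set ℕ) := Set.range (fun j : Fin r => {n | 0 < n ∧ c n = j}) with hS
  have hcov : Hindman.FS a ⊆ ⋃₀ S := by
    intro m hm
    exact ⟨{n | 0 < n ∧ c n = c m}, ⟨c m, rfl⟩, hapos m hm, rfl⟩
  obtain ⟨C, hCS, b, hb⟩ :=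
    Hindman.FS_partition_regular a S (Set.finite_range _) hcov
  obtain ⟨j, rfl⟩ := hCS
  -- every term of b is positive
  have hbpos : ∀ i, 1 ≤ b.get i := fun i => (hb (Hindman.FS.singleton b i)).1
  -- block machinery
  set g := hindmanBlk b with hg
  set x : ℕ → ℕ := fun n => ∑ i ∈ Finset.Ico (g n).1 ((g n).1 + (g n).2), b.get i with hx
  have hlen : ∀ n, 1 ≤ (g n).2 := by
    intro n; cases n with
    | zero => exact le_refl 1
    | succ n => exact Nat.le_add_left 1 _
  have hxlen : ∀ n, (g n).2 ≤ x n := by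
    intro n
    calc (g n).2 = ∑ _i ∈ Finset.Ico (g n).1 ((g n).1 + (g n).2), 1 := by
          rw [Finset.sum_const, smul_eq_mul, mul_one, Nat.card_Ico]; omega
      _ ≤ x n := Finset.sum_le_sum fun i _ => hbpos i
  have hxpos : ∀ n, 0 < x n := fun n => lt_of_lt_of_le (hlen n) (hxlen n)
  have hsucc : ∀ n, g (n + 1) = ((g n).1 + (g n).2, x n + 1) := fun n => rfl
  have hmono : StrictMono x := by
    apply strictMono_nat_of_lt_succ
    intro n
    have : x n + 1 ≤ x (n + 1) := by
      have := hxlen (n + 1)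
      rw [hsucc n] at this
      exact this
    omega
  -- blocks are ordered: for m < n, block m ends before block n starts
  have hstart : ∀ m n, m < n → (g m).1 + (g m).2 ≤ (g n).1 := by
    intro m n h
    induction n with
    | zero => omega
    | succ n ih =>
      rw [hsucc n]
      rcases Nat.lt_succ_iff_lt_or_eq.mp h with h' | h'
      · exact le_trans (ih h') (Nat.le_add_right _ _)
      · subst h'; rfl
  refine ⟨x, hmono, hxpos, j, ?_⟩
  intro F hF
  have hdisj : (F : Set ℕ).PairwiseDisjoint
      (fun n => Finset.Ico (g n).1 ((g n).1 + (g n).2)) := by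
    intro m _ n _ hmn
    rcases Nat.lt_or_ge m n with h | h
    · exact Finset.Ico_disjoint_Ico_consecutive _ _ _ |>.mono_right
        (Finset.Ico_subset_Ico (hstart m n h) le_rfl)
    · have h' : n < m := lt_of_le_of_ne h (Ne.symm hmn)
      exact (Finset.Ico_disjoint_Ico_consecutive _ _ _ |>.mono_right
        (Finset.Ico_subset_Ico (hstart n m h') le_rfl)).symm
  have hsum : ∑ n ∈ F, x n =
      ∑ i ∈ F.biUnion (fun n => Finset.Ico (g n).1 ((g n).1 + (g n).2)), b.get i :=
    (Finset.sum_biUnion hdisj).symm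
  have hne : (F.biUnion (fun n => Finset.Ico (g n).1 ((g n).1 + (g n).2))).Nonempty := by
    obtain ⟨n, hn⟩ := hF
    exact ⟨(g n).1, Finset.mem_biUnion.mpr ⟨n, hn, Finset.mem_Ico.mpr
      ⟨le_refl _, Nat.lt_add_of_pos_right (hlen n)⟩⟩⟩
  rw [hsum]
  exact (hb (Hindman.FS.finset_sum b _ hne)).2
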